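/- Let H be a complete graph and (E_0, E_1, E_2) an ordered partition of E(H). Let M be a matching of H with M ⊆ E_0 and |M| < ⌊|V(H)|/2⌋, and set X = V(H) − V(M). If the number of edges between V(M) and X belonging to E_0 strictly exceeds the number of such edges belonging to E_2, then H contains a good matching for (E_0,E_1,E_2) of order |M|+1. -/

import Mathlib

/-- A matching of a graph: a pairwise disjoint set of its edges. -/
def IsMatchingOn {V : Type*} (G : SimpleGraph V) (M : Set (Sym2 V)) : Prop :=
  M ⊆ G.edgeSet ∧ M.Pairwise fun e f => ∀ v, v ∈ e → v ∉ f

/-- The vertices covered by a set of edges. -/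
def coveredSet {V : Type*} (M : Set (Sym2 V)) : Set V := {v | ∃ e ∈ M, v ∈ e}

/-- The edges with one endpoint in A and the other in B. -/
def betweenSet {V : Type*} (A B : Set V) : Set (Sym2 V) :=
  {e | ∃ a ∈ A, ∃ b ∈ B, e = s(a, b)}

/-- The neighbours of `w` inside `X` along edges of `E`. -/
def nbrIn {V : Type*} (X : Set V) (E : Set (Sym2 V)) (w : V) : Set V :=
  {x | x ∈ X ∧ s(w, x) ∈ E}

/-- The edges of `E` from a vertex of `e` to `X`. -/
def edgesFrom {V : Type*} (X : Set V) (E : Set (Sym2 V)) (e : Sym2 V) : Set (Sym2 V) :=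
  {f | f ∈ E ∧ ∃ w, w ∈ e ∧ ∃ x ∈ X, f = s(w, x)}

private lemma symm_r {V : Type*} :
    Symmetric (fun (e f : Sym2 V) => ∀ v, v ∈ e → v ∉ f) := by
  intro e f h w hwf hwe
  exact h w hwe hwf

private lemma ncard_biUnion' {α β : Type*} [Finite β] (s : Finset α) (f : α → Set β)
    (hdisj : ∀ a ∈ s, ∀ b ∈ s, a ≠ b → Disjoint (f a) (f b)) :
    (⋃ a ∈ s, f a).ncard = ∑ a ∈ s, (f a).ncard := by
  classical
  induction s using Finset.induction_on with
  | empty => simp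
  | @insert a s ha ih =>
    rw [Finset.set_biUnion_insert, Finset.sum_insert ha,
      Set.ncard_union_eq ?_ (Set.toFinite _) (Set.toFinite _),
      ih (fun a ha b hb hab => hdisj a (Finset.mem_insert_of_mem ha)
        b (Finset.mem_insert_of_mem hb) hab)]
    rw [Set.disjoint_iUnion_right]
    intro b
    rw [Set.disjoint_iUnion_right]
    intro hb
    exact hdisj a (Finset.mem_insert_self a s) b (Finset.mem_insert_of_mem hb)
      (by rintro rfl; exact ha hb)

private lemma ncard_biUnion_le' {α β : Type*} [Finite β] (s : Finset α) (f : α → Set β) :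
    (⋃ a ∈ s, f a).ncard ≤ ∑ a ∈ s, (f a).ncard := by
  classical
  induction s using Finset.induction_on with
  | empty => simp
  | @insert a s ha ih =>
    rw [Finset.set_biUnion_insert, Finset.sum_insert ha]
    exact le_trans (Set.ncard_union_le _ _) (by omega)

/-- The combinatorial core, asymmetric version. -/
private lemma aux_of_mem {V : Type*} [Fintype V] {X A0 A1 B0 B1 : Set V}
    (hA0X : A0 ⊆ X) (hA1X : A1 ⊆ X) (hB0X : B0 ⊆ X) (hB1X : B1 ⊆ X)
    (hXcard : 2 ≤ X.ncard)
    (hlt : (X \ (A0 ∪ A1)).ncard + (X \ (B0 ∪ B1)).ncard < A0.ncard + B0.ncard)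
    {x0 : V} (hx0 : x0 ∈ A0) :
    ∃ x ∈ A0 ∪ A1, ∃ y ∈ B0 ∪ B1, x ≠ y ∧ (x ∈ A0 ∨ y ∈ B0) := by
  classical
  by_contra hcon
  push_neg at hcon
  -- hcon : ∀ x ∈ A0 ∪ A1, ∀ y ∈ B0 ∪ B1, x ≠ y → x ∉ A0 ∧ y ∉ B0
  have key1 : ∀ y ∈ B0 ∪ B1, y = x0 := by
    intro y hy
    by_contra hne
    exact (hcon x0 (Or.inl hx0) y hy (fun h => hne h.symm)).1 hx0
  have hBsub : B0 ∪ B1 ⊆ {x0} := fun y hy => key1 y hy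
  have hBcard : (B0 ∪ B1).ncard ≤ 1 := by
    simpa using Set.ncard_le_ncard hBsub (Set.toFinite _)
  have hABX : A0 ∪ A1 ⊆ X := Set.union_subset hA0X hA1X
  have hBBX : B0 ∪ B1 ⊆ X := Set.union_subset hB0X hB1X
  have hXA : (X \ (A0 ∪ A1)).ncard = X.ncard - (A0 ∪ A1).ncard :=
    Set.ncard_diff hABX (Set.toFinite _)
  have hXB : (X \ (B0 ∪ B1)).ncard = X.ncard - (B0 ∪ B1).ncard :=
    Set.ncard_diff hBBX (Set.toFinite _)
  have hABle : (A0 ∪ A1).ncard ≤ X.ncard := Set.ncard_le_ncard hABX (Set.toFinite _)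
  have hBBle : (B0 ∪ B1).ncard ≤ X.ncard := Set.ncard_le_ncard hBBX (Set.toFinite _)
  have hA0le : A0.ncard ≤ (A0 ∪ A1).ncard :=
    Set.ncard_le_ncard Set.subset_union_left (Set.toFinite _)
  have hB0le : B0.ncard ≤ (B0 ∪ B1).ncard :=
    Set.ncard_le_ncard Set.subset_union_left (Set.toFinite _)
  by_cases h2 : ∃ x1 ∈ A0, x1 ≠ x0
  · -- then B0 ∪ B1 = ∅
    obtain ⟨x1, hx1, hx1ne⟩ := h2
    have hBe : B0 ∪ B1 = ∅ := by
      rw [Set.eq_empty_iff_forall_notMem]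
      intro y hy
      have h1 : y = x0 := key1 y hy
      have h2 : y = x1 := by
        by_contra hne
        exact (hcon x1 (Or.inl hx1) y hy (fun h => hne h.symm)).1 hx1
      exact hx1ne (h2 ▸ h1)
    have hB0e : B0.ncard = 0 := by
      have : B0 = ∅ := Set.subset_eq_empty (hBe ▸ Set.subset_union_left) rfl
      simp [this]
    have hA0X' : A0.ncard ≤ X.ncard := Set.ncard_le_ncard hA0X (Set.toFinite _)
    have hBB0 : (B0 ∪ B1).ncard = 0 := by rw [hBe]; simp
    omega
  · -- A0 = {x0}
    push_neg at h2
    have hA0sub : A0 ⊆ {x0} := fun x hx => h2 x hx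
    have hA0card : A0.ncard ≤ 1 := by
      simpa using Set.ncard_le_ncard hA0sub (Set.toFinite _)
    by_cases h3 : ∃ y0, y0 ∈ B0
    · obtain ⟨y0, hy0⟩ := h3
      have hy0x0 : y0 = x0 := key1 y0 (Or.inl hy0)
      have key2 : ∀ x ∈ A0 ∪ A1, x = x0 := by
        intro x hx
        by_contra hne
        exact (hcon x hx y0 (Or.inl hy0) (hy0x0 ▸ hne)).2 hy0
      have hAsub : A0 ∪ A1 ⊆ {x0} := fun x hx => key2 x hx
      have hAcard : (A0 ∪ A1).ncard ≤ 1 := by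
        simpa using Set.ncard_le_ncard hAsub (Set.toFinite _)
      omega
    · push_neg at h3
      have hB0e : B0.ncard = 0 := by
        have : B0 = ∅ := Set.eq_empty_iff_forall_notMem.mpr h3
        simp [this]
      omega

/-- The combinatorial core: finding an augmenting pair. -/
private lemma aux_pair {V : Type*} [Fintype V] {X A0 A1 B0 B1 : Set V}
    (hA0X : A0 ⊆ X) (hA1X : A1 ⊆ X) (hB0X : B0 ⊆ X) (hB1X : B1 ⊆ X)
    (hXcard : 2 ≤ X.ncard)
    (hlt : (X \ (A0 ∪ A1)).ncard + (X \ (B0 ∪ B1)).ncard < A0.ncard + B0.ncard) :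
    ∃ x ∈ A0 ∪ A1, ∃ y ∈ B0 ∪ B1, x ≠ y ∧ (x ∈ A0 ∨ y ∈ B0) := by
  by_cases hA : A0.Nonempty
  · obtain ⟨x0, hx0⟩ := hA
    exact aux_of_mem hA0X hA1X hB0X hB1X hXcard hlt hx0
  · have hA0 : A0.ncard = 0 := by
      rw [Set.not_nonempty_iff_eq_empty] at hA
      simp [hA]
    have hB : B0.Nonempty := by
      rw [← Set.ncard_pos (Set.toFinite _)]
      omega
    obtain ⟨y0, hy0⟩ := hB
    obtain ⟨y, hy, x, hx, hne, hor⟩ :=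
      aux_of_mem hB0X hB1X hA0X hA1X hXcard (by omega) hy0
    exact ⟨x, hx, y, hy, hne.symm, hor.symm⟩

private lemma decomp_eq {V : Type*} [Fintype V] (M : Set (Sym2 V))
    (hM : IsMatchingOn (⊤ : SimpleGraph V) M) (E : Set (Sym2 V)) :
    (betweenSet (coveredSet M) (coveredSet M)ᶜ ∩ E).ncard
      = ∑ e ∈ (Set.toFinite M).toFinset, (edgesFrom (coveredSet M)ᶜ E e).ncard := by
  classical
  have hunion : betweenSet (coveredSet M) (coveredSet M)ᶜ ∩ E
      = ⋃ e ∈ (Set.toFinite M).toFinset, edgesFrom (coveredSet M)ᶜ E e := by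
    ext f
    simp only [Set.mem_inter_iff, Set.mem_iUnion, betweenSet, edgesFrom,
      Set.Finite.mem_toFinset, Set.mem_setOf_eq]
    constructor
    · rintro ⟨⟨a, ha, b, hb, rfl⟩, hfE⟩
      obtain ⟨e, heM, hae⟩ := ha
      exact ⟨e, heM, hfE, a, hae, b, hb, rfl⟩
    · rintro ⟨e, heM, hfE, w, hwe, x, hxX, rfl⟩
      exact ⟨⟨w, ⟨e, heM, hwe⟩, x, hxX, rfl⟩, hfE⟩
  rw [hunion]
  apply ncard_biUnion'
  intro e he e' he' hne
  rw [Set.Finite.mem_toFinset] at he he'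
  rw [Set.disjoint_left]
  rintro f ⟨hfE, w, hwe, x, hxX, rfl⟩ ⟨_, w', hwe', x', hxX', heq⟩
  have hwcov : w ∈ coveredSet M := ⟨e, he, hwe⟩
  have hwcov' : w' ∈ coveredSet M := ⟨e', he', hwe'⟩
  rcases Sym2.eq_iff.mp heq with ⟨hww, _⟩ | ⟨hwx, _⟩
  · exact hM.2 he he' hne w hwe (hww ▸ hwe')
  · exact hxX' (hwx ▸ hwcov)

private lemma edgesFrom_ncard {V : Type*} [Fintype V] (X : Set V) (E : Set (Sym2 V))
    {u v : V} (huv : u ≠ v) (hu : u ∉ X) (hv : v ∉ X) :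
    (edgesFrom X E s(u, v)).ncard = (nbrIn X E u).ncard + (nbrIn X E v).ncard := by
  classical
  have himg : edgesFrom X E s(u, v)
      = (fun x => s(u, x)) '' nbrIn X E u ∪ (fun x => s(v, x)) '' nbrIn X E v := by
    ext f
    simp only [edgesFrom, nbrIn, Set.mem_union, Set.mem_image, Set.mem_setOf_eq]
    constructor
    · rintro ⟨hfE, w, hwe, x, hxX, rfl⟩
      rcases Sym2.mem_iff.mp hwe with rfl | rfl
      · exact Or.inl ⟨x, ⟨hxX, hfE⟩, rfl⟩
      · exact Or.inr ⟨x, ⟨hxX, hfE⟩, rfl⟩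
    · rintro (⟨x, ⟨hxX, hfE⟩, rfl⟩ | ⟨x, ⟨hxX, hfE⟩, rfl⟩)
      · exact ⟨hfE, u, Sym2.mem_iff.mpr (Or.inl rfl), x, hxX, rfl⟩
      · exact ⟨hfE, v, Sym2.mem_iff.mpr (Or.inr rfl), x, hxX, rfl⟩
  have hdisj : Disjoint ((fun x => s(u, x)) '' nbrIn X E u)
      ((fun x => s(v, x)) '' nbrIn X E v) := by
    rw [Set.disjoint_left]
    rintro f ⟨x, ⟨hxX, _⟩, rfl⟩ ⟨x', ⟨hxX', _⟩, heq⟩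
    rcases Sym2.eq_iff.mp heq with ⟨hvu, _⟩ | ⟨hvx, _⟩
    · exact huv hvu.symm
    · exact hv (by rw [hvx]; exact hxX)
  rw [himg, Set.ncard_union_eq hdisj (Set.toFinite _) (Set.toFinite _),
    Set.ncard_image_of_injOn, Set.ncard_image_of_injOn]
  · intro x hx x' hx' heq
    rcases Sym2.eq_iff.mp heq with ⟨_, h⟩ | ⟨hvx, _⟩
    · exact h
    · exact absurd (hvx ▸ hx'.1) hv
  · intro x hx x' hx' heq
    rcases Sym2.eq_iff.mp heq with ⟨_, h⟩ | ⟨hux, _⟩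
    · exact h
    · exact absurd (hux ▸ hx'.1) hu

/-- augmenting a good matching, part (2). -/
theorem stmt_8 {V : Type*} [Fintype V] (E0 E1 E2 : Set (Sym2 V))
    (hpart : (⊤ : SimpleGraph V).edgeSet = E0 ∪ E1 ∪ E2)
    (h01 : Disjoint E0 E1) (h02 : Disjoint E0 E2) (h12 : Disjoint E1 E2)
    (M : Set (Sym2 V)) (hM : IsMatchingOn (⊤ : SimpleGraph V) M) (hM0 : M ⊆ E0)
    (hMcard : M.ncard < Fintype.card V / 2)
    (hE : (betweenSet (coveredSet M) (coveredSet M)ᶜ ∩ E2).ncard <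
          (betweenSet (coveredSet M) (coveredSet M)ᶜ ∩ E0).ncard) :
    ∃ M' : Set (Sym2 V), IsMatchingOn (⊤ : SimpleGraph V) M' ∧
      M' ∩ E2 = ∅ ∧ (M' ∩ E1).ncard ≤ 1 ∧ M'.ncard = M.ncard + 1 := by
  classical
  set X : Set V := (coveredSet M)ᶜ with hXdef
  -- Step A: X has at least two elements
  have hcovle : (coveredSet M).ncard ≤ 2 * M.ncard := by
    have hcov : coveredSet M = ⋃ e ∈ (Set.toFinite M).toFinset, {v | v ∈ e} := by
      ext v
      simp only [coveredSet, Set.mem_iUnion, Set.Finite.mem_toFinset, Set.mem_setOf_eq]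
      exact ⟨fun ⟨e, h1, h2⟩ => ⟨e, h1, h2⟩, fun ⟨e, h1, h2⟩ => ⟨e, h1, h2⟩⟩
    rw [hcov]
    calc (⋃ e ∈ (Set.toFinite M).toFinset, {v | v ∈ e}).ncard
        ≤ ∑ e ∈ (Set.toFinite M).toFinset, ({v | v ∈ e} : Set V).ncard :=
          ncard_biUnion_le' _ _
      _ ≤ ∑ _e ∈ (Set.toFinite M).toFinset, 2 := by
          apply Finset.sum_le_sum
          intro e he
          induction e using Sym2.ind with
          | _ a b =>
            have : ({v | v ∈ s(a, b)} : Set V) = {a, b} := by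
              ext v; simp [Sym2.mem_iff]
            rw [this]
            exact le_trans (Set.ncard_insert_le _ _) (by simp)
      _ = 2 * M.ncard := by
          rw [Finset.sum_const, smul_eq_mul, mul_comm,
            Set.ncard_eq_toFinset_card M (Set.toFinite M)]
  have hXcard : 2 ≤ X.ncard := by
    have h1 : (coveredSet M).ncard + X.ncard = Nat.card V :=
      Set.ncard_add_ncard_compl (coveredSet M)
    rw [Nat.card_eq_fintype_card] at h1
    omega
  -- Step B: pigeonhole over matching edges
  rw [decomp_eq M hM E2, decomp_eq M hM E0] at hE
  obtain ⟨e, heMf, hlt⟩ := Finset.exists_lt_of_sum_lt hE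
  have heM : e ∈ M := (Set.Finite.mem_toFinset _).mp heMf
  obtain ⟨u, v, rfl⟩ : ∃ u v, e = s(u, v) := Sym2.exists.mp ⟨e, rfl⟩
  have huv : u ≠ v := by
    have := hM.1 heM
    rw [SimpleGraph.mem_edgeSet] at this
    exact this.ne
  have hucov : u ∈ coveredSet M := ⟨s(u, v), heM, Sym2.mem_iff.mpr (Or.inl rfl)⟩
  have hvcov : v ∈ coveredSet M := ⟨s(u, v), heM, Sym2.mem_iff.mpr (Or.inr rfl)⟩
  have huX : u ∉ X := by simp [hXdef, hucov]
  have hvX : v ∉ X := by simp [hXdef, hvcov]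
  rw [edgesFrom_ncard X E2 huv huX hvX, edgesFrom_ncard X E0 huv huX hvX] at hlt
  -- partition of neighbourhoods
  have hN2 : ∀ w, w ∉ X → nbrIn X E2 w = X \ (nbrIn X E0 w ∪ nbrIn X E1 w) := by
    intro w hw
    ext x
    simp only [nbrIn, Set.mem_setOf_eq, Set.mem_diff, Set.mem_union]
    constructor
    · rintro ⟨hxX, h2⟩
      exact ⟨hxX, by
        rintro (⟨_, h0⟩ | ⟨_, h1⟩)
        · exact (Set.disjoint_left.mp h02 h0) h2
        · exact (Set.disjoint_left.mp h12 h1) h2⟩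
    · rintro ⟨hxX, hn⟩
      refine ⟨hxX, ?_⟩
      have hwx : w ≠ x := fun h => hw (h ▸ hxX)
      have hedge : s(w, x) ∈ (⊤ : SimpleGraph V).edgeSet := by
        rw [SimpleGraph.mem_edgeSet]; exact hwx
      rw [hpart] at hedge
      rcases hedge with (h0 | h1) | h2
      · exact absurd (Or.inl ⟨hxX, h0⟩) hn
      · exact absurd (Or.inr ⟨hxX, h1⟩) hn
      · exact h2
  have hsub : ∀ E : Set (Sym2 V), ∀ w, nbrIn X E w ⊆ X := fun E w x hx => hx.1
  have hlt' : (X \ (nbrIn X E0 u ∪ nbrIn X E1 u)).ncard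
      + (X \ (nbrIn X E0 v ∪ nbrIn X E1 v)).ncard
      < (nbrIn X E0 u).ncard + (nbrIn X E0 v).ncard := by
    rw [← hN2 u huX, ← hN2 v hvX]; exact hlt
  obtain ⟨x, hx, y, hy, hxy, hor⟩ :=
    aux_pair (hsub E0 u) (hsub E1 u) (hsub E0 v) (hsub E1 v) hXcard hlt'
  -- extract facts about x, y
  have hxX : x ∈ X := by rcases hx with h | h <;> exact h.1
  have hyX : y ∈ X := by rcases hy with h | h <;> exact h.1
  have hux01 : s(u, x) ∈ E0 ∪ E1 := by
    rcases hx with h | h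
    · exact Or.inl h.2
    · exact Or.inr h.2
  have hvy01 : s(v, y) ∈ E0 ∪ E1 := by
    rcases hy with h | h
    · exact Or.inl h.2
    · exact Or.inr h.2
  have hor' : s(u, x) ∈ E0 ∨ s(v, y) ∈ E0 := by
    rcases hor with h | h
    · exact Or.inl h.2
    · exact Or.inr h.2
  have hxcov : x ∉ coveredSet M := hxX
  have hycov : y ∉ coveredSet M := hyX
  have hux : u ≠ x := fun h => huX (h ▸ hxX)
  have hvy : v ≠ y := fun h => hvX (h ▸ hyX)
  have huy : u ≠ y := fun h => huX (h ▸ hyX)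
  have hvx : v ≠ x := fun h => hvX (h ▸ hxX)
  -- u, v not in other matching edges
  have hunotf : ∀ f ∈ M \ {s(u, v)}, u ∉ f := by
    rintro f ⟨hfM, hfne⟩ hu
    exact hM.2 heM hfM (fun h => hfne (Set.mem_singleton_iff.mpr h.symm)) u
      (Sym2.mem_iff.mpr (Or.inl rfl)) hu
  have hvnotf : ∀ f ∈ M \ {s(u, v)}, v ∉ f := by
    rintro f ⟨hfM, hfne⟩ hv
    exact hM.2 heM hfM (fun h => hfne (Set.mem_singleton_iff.mpr h.symm)) v
      (Sym2.mem_iff.mpr (Or.inr rfl)) hv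
  have hxnotf : ∀ f ∈ M, x ∉ f := fun f hf hx' => hxcov ⟨f, hf, hx'⟩
  have hynotf : ∀ f ∈ M, y ∉ f := fun f hf hy' => hycov ⟨f, hf, hy'⟩
  -- the new matching
  refine ⟨insert s(u, x) (insert s(v, y) (M \ {s(u, v)})), ⟨?_, ?_⟩, ?_, ?_, ?_⟩
  · -- subset of edge set
    intro f hf
    rcases hf with rfl | rfl | hf
    · rw [SimpleGraph.mem_edgeSet]; exact hux
    · rw [SimpleGraph.mem_edgeSet]; exact hvy
    · exact hM.1 hf.1
  · -- pairwise disjoint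
    haveI : Std.Symm (fun (e f : Sym2 V) => ∀ v, v ∈ e → v ∉ f) := ⟨fun a b h => symm_r h⟩
    rw [Set.pairwise_insert_of_symm, Set.pairwise_insert_of_symm]
    refine ⟨⟨hM.2.mono Set.diff_subset, ?_⟩, ?_⟩
    · intro f hf _ w hw
      rcases Sym2.mem_iff.mp hw with rfl | rfl
      · exact hvnotf f hf
      · exact hynotf f hf.1
    · intro f hf _ w hw
      rcases Sym2.mem_iff.mp hw with rfl | rfl
      · rcases hf with rfl | hf
        · intro hmem
          rcases Sym2.mem_iff.mp hmem with h | h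
          · exact huv h
          · exact huy h
        · exact hunotf f hf
      · rcases hf with rfl | hf
        · intro hmem
          rcases Sym2.mem_iff.mp hmem with h | h
          · exact hvx h.symm
          · exact hxy h
        · exact hxnotf f hf.1
  · -- no E2 edges
    rw [Set.eq_empty_iff_forall_notMem]
    rintro f ⟨hf, hf2⟩
    rcases hf with rfl | rfl | hf
    · rcases hux01 with h | h
      · exact Set.disjoint_left.mp h02 h hf2
      · exact Set.disjoint_left.mp h12 h hf2
    · rcases hvy01 with h | h
      · exact Set.disjoint_left.mp h02 h hf2
      · exact Set.disjoint_left.mp h12 h hf2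
    · exact Set.disjoint_left.mp h02 (hM0 hf.1) hf2
  · -- at most one E1 edge
    rcases hor' with h0 | h0
    · have hsub1 : insert s(u, x) (insert s(v, y) (M \ {s(u, v)})) ∩ E1 ⊆ {s(v, y)} := by
        rintro f ⟨hf, hf1⟩
        rcases hf with rfl | rfl | hf
        · exact absurd hf1 (Set.disjoint_left.mp h01 h0)
        · rfl
        · exact absurd hf1 (Set.disjoint_left.mp h01 (hM0 hf.1))
      simpa using Set.ncard_le_ncard hsub1 (Set.toFinite _)
    · have hsub1 : insert s(u, x) (insert s(v, y) (M \ {s(u, v)})) ∩ E1 ⊆ {s(u, x)} := by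
        rintro f ⟨hf, hf1⟩
        rcases hf with rfl | rfl | hf
        · rfl
        · exact absurd hf1 (Set.disjoint_left.mp h01 h0)
        · exact absurd hf1 (Set.disjoint_left.mp h01 (hM0 hf.1))
      simpa using Set.ncard_le_ncard hsub1 (Set.toFinite _)
  · -- cardinality
    have h1 : s(v, y) ∉ M \ {s(u, v)} := fun h =>
      hynotf _ h.1 (Sym2.mem_iff.mpr (Or.inr rfl))
    have h2 : s(u, x) ∉ insert s(v, y) (M \ {s(u, v)}) := by
      rintro (h | h)
      · rcases Sym2.eq_iff.mp h with ⟨h', _⟩ | ⟨h', _⟩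
        · exact huv h'
        · exact huy h'
      · exact hxnotf _ h.1 (Sym2.mem_iff.mpr (Or.inr rfl))
    rw [Set.ncard_insert_of_notMem h2 (Set.toFinite _),
      Set.ncard_insert_of_notMem h1 (Set.toFinite _),
      Set.ncard_diff_singleton_of_mem heM]
    have : 1 ≤ M.ncard := (Set.ncard_pos (Set.toFinite _)).mpr ⟨_, heM⟩
    omega
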